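/- A set of n-sided dice (A,B,C) (a partition of [3n] into three n-element sets) is balanced, i.e., W(A,B) = W(B,C) = W(C,A), if and only if the face-sums are all equal: Σ_{i∈A} i = Σ_{i∈B} i = Σ_{i∈C} i. -/

import Mathlib

/-- Number of winning pairs: pairs (x,y) with x from X, y from Y, and x > y. -/
def W (X Y : Finset ℕ) : ℕ := ((X ×ˢ Y).filter (fun p => p.2 < p.1)).card

/-- A set of n-sided dice: a partition of [3n] into three n-element sets. -/
def IsDice (n : ℕ) (A B C : Finset ℕ) : Prop :=
  A ∪ B ∪ C = Finset.Icc 1 (3 * n) ∧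
  A.card = n ∧ B.card = n ∧ C.card = n ∧
  Disjoint A B ∧ Disjoint A C ∧ Disjoint B C

private lemma W_swap (X Y : Finset ℕ) :
    W Y X = ((X ×ˢ Y).filter (fun p => p.1 < p.2)).card := by
  unfold W
  apply Finset.card_bij (fun p _ => (p.2, p.1))
  · intro p hp
    simp only [Finset.mem_filter, Finset.mem_product] at hp ⊢
    tauto
  · intro p hp q hq hpq
    simpa [Prod.ext_iff, and_comm] using hpq
  · intro p hp
    refine ⟨(p.2, p.1), ?_, rfl⟩
    simp only [Finset.mem_filter, Finset.mem_product] at hp ⊢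
    tauto

private lemma W_add (X Y : Finset ℕ) (h : Disjoint X Y) :
    W X Y + W Y X = X.card * Y.card := by
  rw [W_swap X Y, W, ← Finset.card_product X Y]
  rw [← Finset.card_filter_add_card_filter_not
    (s := X ×ˢ Y) (p := fun p => p.2 < p.1)]
  congr 1
  apply congrArg Finset.card
  apply Finset.filter_congr
  intro p hp
  simp only [Finset.mem_product] at hp
  have : p.1 ≠ p.2 := fun he => Finset.disjoint_left.mp h hp.1 (he ▸ hp.2)
  constructor <;> intro h' <;> omega

private lemma W_self (X : Finset ℕ) : 2 * W X X + X.card = X.card * X.card := by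
  have h1 : W X X = ((X ×ˢ X).filter (fun p => p.1 < p.2)).card := W_swap X X
  have h2 := Finset.card_filter_add_card_filter_not
    (s := X ×ˢ X) (p := fun p => p.2 < p.1)
  have h3 := Finset.card_filter_add_card_filter_not
    (s := (X ×ˢ X).filter (fun p => ¬ p.2 < p.1)) (p := fun p => p.1 < p.2)
  have e1 : ((X ×ˢ X).filter (fun p => ¬ p.2 < p.1)).filter (fun p => p.1 < p.2)
      = (X ×ˢ X).filter (fun p => p.1 < p.2) := by
    rw [Finset.filter_filter]
    apply Finset.filter_congr
    intro p hp
    constructor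
    · rintro ⟨_, h'⟩; exact h'
    · intro h'; exact ⟨by omega, h'⟩
  have e2 : ((X ×ˢ X).filter (fun p => ¬ p.2 < p.1)).filter (fun p => ¬ p.1 < p.2)
      = X.diag := by
    ext p
    simp only [Finset.mem_filter, Finset.mem_product, Finset.mem_diag]
    constructor
    · rintro ⟨⟨⟨h1', h2'⟩, h3'⟩, h4'⟩
      exact ⟨h1', by omega⟩
    · rintro ⟨h1', h2'⟩
      exact ⟨⟨⟨h1', h2' ▸ h1'⟩, by omega⟩, by omega⟩
  rw [e1, e2, Finset.diag_card] at h3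
  rw [Finset.card_product] at h2
  unfold W at h1 ⊢
  omega

private lemma W_union_right (X Y Z : Finset ℕ) (h : Disjoint Y Z) :
    W X (Y ∪ Z) = W X Y + W X Z := by
  unfold W
  rw [Finset.product_union, Finset.filter_union, Finset.card_union_of_disjoint]
  apply Finset.disjoint_filter_filter
  rw [Finset.disjoint_left]
  intro p hp hp'
  simp only [Finset.mem_product] at hp hp'
  exact Finset.disjoint_left.mp h hp.2 hp'.2

private lemma W_Icc (m : ℕ) (X : Finset ℕ) (hX : X ⊆ Finset.Icc 1 m) :
    W X (Finset.Icc 1 m) = (∑ i ∈ X, i) - X.card := by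
  unfold W
  rw [Finset.card_eq_sum_card_fiberwise (f := Prod.fst) (t := X)
    (by intro p hp; simp only [Finset.coe_filter, Set.mem_setOf_eq, Finset.mem_product] at hp; exact hp.1.1)]
  have key : ∀ x ∈ X, (((X ×ˢ Finset.Icc 1 m).filter (fun p => p.2 < p.1)).filter
      (fun p => p.1 = x)).card = x - 1 := by
    intro x hx
    have hxm : x ∈ Finset.Icc 1 m := hX hx
    rw [Finset.mem_Icc] at hxm
    have : (((X ×ˢ Finset.Icc 1 m).filter (fun p => p.2 < p.1)).filter
        (fun p => p.1 = x)) = ({x} : Finset ℕ) ×ˢ Finset.Icc 1 (x - 1) := by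
      ext p
      simp only [Finset.mem_filter, Finset.mem_product, Finset.mem_singleton,
        Finset.mem_Icc]
      constructor
      · rintro ⟨⟨⟨hp1, hp2⟩, hlt⟩, heq⟩
        exact ⟨heq, hp2.1, by omega⟩
      · rintro ⟨heq, h1, h2⟩
        exact ⟨⟨⟨heq ▸ hx, h1, by omega⟩, by omega⟩, heq⟩
    rw [this, Finset.card_product, Finset.card_singleton, Nat.card_Icc]
    omega
  rw [Finset.sum_congr rfl key]
  have h1 : ∀ x ∈ X, 1 ≤ x := by
    intro x hx
    have := hX hx
    rw [Finset.mem_Icc] at this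
    exact this.1
  have h2 : (∑ x ∈ X, (x - 1)) + X.card = ∑ x ∈ X, x := by
    rw [Finset.card_eq_sum_ones, ← Finset.sum_add_distrib]
    exact Finset.sum_congr rfl (fun x hx => by have := h1 x hx; omega)
  omega

theorem stmt9 (n : ℕ) (A B C : Finset ℕ) (h : IsDice n A B C) :
    (W A B = W B C ∧ W B C = W C A) ↔
    ((∑ i ∈ A, i) = (∑ i ∈ B, i) ∧ (∑ i ∈ B, i) = (∑ i ∈ C, i)) := by
  obtain ⟨hU, hcA, hcB, hcC, hdAB, hdAC, hdBC⟩ := h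
  have hsub : ∀ X : Finset ℕ, X ⊆ A ∪ B ∪ C → X ⊆ Finset.Icc 1 (3 * n) := by
    intro X hX; rw [← hU]; exact hX
  have hsubA : A ⊆ Finset.Icc 1 (3 * n) := hsub A (by
    intro x hx; simp [Finset.mem_union, hx])
  have hsubB : B ⊆ Finset.Icc 1 (3 * n) := hsub B (by
    intro x hx; simp [Finset.mem_union, hx])
  have hsubC : C ⊆ Finset.Icc 1 (3 * n) := hsub C (by
    intro x hx; simp [Finset.mem_union, hx])
  have hd : Disjoint (A ∪ B) C := Finset.disjoint_union_left.mpr ⟨hdAC, hdBC⟩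
  have hsplit : ∀ X : Finset ℕ,
      W X (Finset.Icc 1 (3 * n)) = W X A + W X B + W X C := by
    intro X
    rw [← hU, W_union_right X (A ∪ B) C hd, W_union_right X A B hdAB]
  have hA := W_Icc (3 * n) A hsubA
  have hB := W_Icc (3 * n) B hsubB
  have hC := W_Icc (3 * n) C hsubC
  rw [hsplit A, hcA] at hA
  rw [hsplit B, hcB] at hB
  rw [hsplit C, hcC] at hC
  have hlbA : n ≤ ∑ i ∈ A, i := by
    calc n = A.card * 1 := by rw [hcA, mul_one]
    _ ≤ ∑ i ∈ A, i := Finset.card_nsmul_le_sum A _ 1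
      (fun x hx => (Finset.mem_Icc.mp (hsubA hx)).1)
  have hlbB : n ≤ ∑ i ∈ B, i := by
    calc n = B.card * 1 := by rw [hcB, mul_one]
    _ ≤ ∑ i ∈ B, i := Finset.card_nsmul_le_sum B _ 1
      (fun x hx => (Finset.mem_Icc.mp (hsubB hx)).1)
  have hlbC : n ≤ ∑ i ∈ C, i := by
    calc n = C.card * 1 := by rw [hcC, mul_one]
    _ ≤ ∑ i ∈ C, i := Finset.card_nsmul_le_sum C _ 1
      (fun x hx => (Finset.mem_Icc.mp (hsubC hx)).1)
  have e1 := W_add A B hdAB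
  have e2 := W_add B C hdBC
  have e3 := W_add C A hdAC.symm
  have f1 := W_self A
  have f2 := W_self B
  have f3 := W_self C
  rw [hcA, hcB] at e1
  rw [hcB, hcC] at e2
  rw [hcC, hcA] at e3
  rw [hcA] at f1
  rw [hcB] at f2
  rw [hcC] at f3
  constructor
  · rintro ⟨g1, g2⟩
    constructor <;> omega
  · rintro ⟨g1, g2⟩
    constructor <;> omega
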